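/- Let p, q ∈ ℂ[X] be nonzero polynomials that are squarefree and coprime (no repeated and no common roots). Then the following are equivalent: (i) both p/q² and q⁴/p² admit rational antiderivatives, i.e. there exist a, b ∈ ℂ[X] with b ≠ 0 and (a'·b − a·b')·q² = p·b², and there exist c, d ∈ ℂ[X] with d ≠ 0 and (c'·d − c·d')·p² = q⁴·d²; (ii) p''·q − 4·p'·q' + 4·p·q'' = 0 (that is, {p,q}_2 = 0). -/

import Mathlib

open Polynomial

private -- L0: antiderivative
lemma exists_antideriv (h : ℂ[X]) : ∃ H : ℂ[X], derivative H = h := by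
  induction h using Polynomial.induction_on' with
  | add f g hf hg =>
    obtain ⟨F, hF⟩ := hf; obtain ⟨G, hG⟩ := hg
    exact ⟨F + G, by simp [hF, hG]⟩
  | monomial n a =>
    refine ⟨C (a / (n+1)) * X ^ (n+1), ?_⟩
    have hn : ((n:ℂ) + 1) ≠ 0 := Nat.cast_add_one_ne_zero n
    rw [← C_mul_X_pow_eq_monomial, derivative_C_mul, derivative_X_pow]
    rw [← mul_assoc, ← C_mul, Nat.add_sub_cancel]
    push_cast
    rw [div_mul_cancel₀ _ hn]

private -- L1: squarefree dvd via roots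
lemma sqf_dvd {f g : ℂ[X]} (hf : Squarefree f)
    (h : ∀ r : ℂ, f.eval r = 0 → g.eval r = 0) : f ∣ g := by
  have hf0 : f ≠ 0 := hf.ne_zero
  rcases eq_or_ne g 0 with rfl | hg0
  · exact dvd_zero f
  have hsplit : f = C f.leadingCoeff * (f.roots.map fun a => X - C a).prod :=
    (IsAlgClosed.splits f).eq_prod_roots
  have hnodup : f.roots.Nodup :=
    Polynomial.nodup_roots (PerfectField.separable_iff_squarefree.mpr hf)
  have hle : f.roots ≤ g.roots := by
    rw [Multiset.le_iff_count]
    intro r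
    rcases eq_or_ne (f.eval r) 0 with hr | hr
    · have h1 : Multiset.count r f.roots ≤ 1 :=
        Multiset.nodup_iff_count_le_one.mp hnodup r
      have h2 : 1 ≤ Multiset.count r g.roots := by
        rw [count_roots]
        exact (rootMultiplicity_pos hg0).mpr (h r hr)
      omega
    · have : Multiset.count r f.roots = 0 := by
        rw [count_roots]; exact rootMultiplicity_eq_zero hr
      omega
  have hdvd : (f.roots.map fun a => X - C a).prod ∣ g :=
    (Multiset.prod_X_sub_C_dvd_iff_le_roots hg0 _).mpr hle
  have hu : IsUnit (C f.leadingCoeff) :=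
    isUnit_C.mpr (isUnit_iff_ne_zero.mpr (leadingCoeff_ne_zero.mpr hf0))
  rw [hsplit, mul_comm]
  exact (IsUnit.mul_right_dvd hu).mpr hdvd

private lemma residue_eval {q N a b : ℂ[X]} (hsq : Squarefree q) (hN : N ≠ 0) (hb : b ≠ 0)
    (hab : IsCoprime a b)
    (heq : (derivative a * b - a * derivative b) * q ^ 2 = N * b ^ 2)
    {r : ℂ} (hr : q.eval r = 0) (hNr : N.eval r ≠ 0) :
    eval r (derivative N * derivative q - N * derivative (derivative q)) = 0 := by
  have hq0 : q ≠ 0 := hsq.ne_zero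
  set w := derivative a * b - a * derivative b with hw
  have hRHS : N * b ^ 2 ≠ 0 := mul_ne_zero hN (pow_ne_zero _ hb)
  have hw0 : w ≠ 0 := by
    intro h0; rw [h0, zero_mul] at heq; exact hRHS heq.symm
  have hmq : rootMultiplicity r q = 1 := by
    have h1 : 0 < rootMultiplicity r q := (rootMultiplicity_pos hq0).mpr hr
    have h2 : rootMultiplicity r q < 2 := by
      by_contra hge; push_neg at hge
      have hdd : (X - C r) ^ 2 ∣ q :=
        (pow_dvd_pow _ hge).trans (pow_rootMultiplicity_dvd q r)
      exact not_isUnit_X_sub_C r (hsq (X - C r) (by rwa [← sq]))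
    omega
  have hq2 : rootMultiplicity r (q ^ 2) = 2 := by
    rw [sq, rootMultiplicity_mul (mul_ne_zero hq0 hq0), hmq]
  have hb2 : rootMultiplicity r (b ^ 2) = 2 * rootMultiplicity r b := by
    rw [sq, rootMultiplicity_mul (mul_ne_zero hb hb)]; ring
  have hNm : rootMultiplicity r N = 0 := rootMultiplicity_eq_zero hNr
  have hcount : rootMultiplicity r w + 2 = 2 * rootMultiplicity r b := by
    have h := congrArg (rootMultiplicity r) heq
    rw [rootMultiplicity_mul (by rw [heq]; exact hRHS), rootMultiplicity_mul hRHS,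
      hq2, hNm, hb2] at h
    omega
  set k := rootMultiplicity r b with hk
  have hk1 : 1 ≤ k := by omega
  have hbr : b.eval r = 0 := (rootMultiplicity_pos hb).mp (by omega)
  have har : a.eval r ≠ 0 := by
    obtain ⟨u, v, huv⟩ := hab
    intro h0
    have h1 := congrArg (eval r) huv
    simp [h0, hbr] at h1
  -- k = 1
  have hkk : k = 1 := by
    by_contra hne
    have hk2 : 2 ≤ k := by omega
    set β := b /ₘ (X - C r) ^ k with hβdef
    have hbfac : (X - C r) ^ k * β = b := pow_mul_divByMonic_rootMultiplicity_eq b r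
    have hβr : β.eval r ≠ 0 := eval_divByMonic_pow_rootMultiplicity_ne_zero r hb
    have hd1 : (X - C r) ^ k ∣ w :=
      (pow_dvd_pow _ (by omega : k ≤ rootMultiplicity r w)).trans (pow_rootMultiplicity_dvd w r)
    have hdb : derivative b
        = C ((k : ℕ) : ℂ) * (X - C r) ^ (k - 1) * β + (X - C r) ^ k * derivative β := by
      conv_lhs => rw [← hbfac]
      rw [derivative_mul, derivative_pow, derivative_X_sub_C, mul_one]
    obtain ⟨j, hj⟩ : ∃ j, k = j + 1 := ⟨k - 1, by omega⟩
    have hwE : w = (X - C r) ^ j *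
        ((X - C r) * (derivative a * β - a * derivative β) - C ((k : ℕ) : ℂ) * (a * β)) := by
      rw [hw, hdb, ← hbfac]
      simp only [hj, Nat.add_sub_cancel]
      ring
    have hd2 : (X - C r) ^ j * (X - C r) ∣ (X - C r) ^ j *
        ((X - C r) * (derivative a * β - a * derivative β) - C ((k : ℕ) : ℂ) * (a * β)) := by
      rw [← pow_succ, ← hj, ← hwE]; exact hd1
    have hd3 := (mul_dvd_mul_iff_left (pow_ne_zero j (X_sub_C_ne_zero r))).mp hd2
    have heval : eval r ((X - C r) * (derivative a * β - a * derivative β)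
        - C ((k : ℕ) : ℂ) * (a * β)) = 0 := dvd_iff_isRoot.mp hd3
    simp only [eval_sub, eval_mul, eval_X, eval_C, sub_self, zero_mul, zero_sub,
      neg_eq_zero] at heval
    exact mul_ne_zero (Nat.cast_ne_zero.mpr (by omega)) (mul_ne_zero har hβr) heval
  -- now k = 1 : factorizations
  have hbfac0 := pow_mul_divByMonic_rootMultiplicity_eq b r
  have hβr0 := eval_divByMonic_pow_rootMultiplicity_ne_zero r hb
  rw [← hk, hkk, pow_one] at hbfac0 hβr0
  set β := b /ₘ (X - C r) with hβdef
  have hqfac0 := pow_mul_divByMonic_rootMultiplicity_eq q r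
  have hQr0 := eval_divByMonic_pow_rootMultiplicity_ne_zero r hq0
  rw [hmq, pow_one] at hqfac0 hQr0
  set Q := q /ₘ (X - C r) with hQdef
  have hdb : derivative b = β + (X - C r) * derivative β := by
    conv_lhs => rw [← hbfac0]
    rw [derivative_mul, derivative_X_sub_C, one_mul]
  have hddb : derivative (derivative b)
      = 2 * derivative β + (X - C r) * derivative (derivative β) := by
    rw [hdb, derivative_add, derivative_mul, derivative_X_sub_C, one_mul]; ring
  have hdq : derivative q = Q + (X - C r) * derivative Q := by
    conv_lhs => rw [← hqfac0]
    rw [derivative_mul, derivative_X_sub_C, one_mul]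
  have hddq : derivative (derivative q)
      = 2 * derivative Q + (X - C r) * derivative (derivative Q) := by
    rw [hdq, derivative_add, derivative_mul, derivative_X_sub_C, one_mul]; ring
  have hkey : (derivative a * b - a * derivative b) * (Q * Q) = N * (β * β) := by
    have h2 : ((X - C r) * (X - C r)) * ((derivative a * b - a * derivative b) * (Q * Q))
        = ((X - C r) * (X - C r)) * (N * (β * β)) := by
      calc ((X - C r) * (X - C r)) * ((derivative a * b - a * derivative b) * (Q * Q))
          = (derivative a * b - a * derivative b) * ((X - C r) * Q) ^ 2 := by ring
        _ = (derivative a * b - a * derivative b) * q ^ 2 := by rw [hqfac0]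
        _ = N * b ^ 2 := heq
        _ = N * ((X - C r) * β) ^ 2 := by rw [hbfac0]
        _ = _ := by ring
    exact mul_left_cancel₀ (mul_ne_zero (X_sub_C_ne_zero r) (X_sub_C_ne_zero r)) h2
  have hkey2 := congrArg derivative hkey
  simp only [derivative_mul, derivative_sub] at hkey2
  have e_db : eval r (derivative b) = eval r β := by
    rw [hdb]; simp
  have e_ddb : eval r (derivative (derivative b)) = 2 * eval r (derivative β) := by
    rw [hddb]; simp
  have e_dq : eval r (derivative q) = eval r Q := by
    rw [hdq]; simp
  have e_ddq : eval r (derivative (derivative q)) = 2 * eval r (derivative Q) := by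
    rw [hddq]; simp
  have E1 := congrArg (eval r) hkey
  have E2 := congrArg (eval r) hkey2
  simp only [eval_mul, eval_add, eval_sub, hbr, e_db, e_ddb] at E1 E2
  rw [eval_sub, eval_mul, eval_mul, e_dq, e_ddq]
  have key3 : (eval r β) ^ 3 *
      (eval r (derivative N) * eval r Q - eval r N * (2 * eval r (derivative Q))) = 0 := by
    linear_combination (-(eval r β * eval r Q)) * E2
      + (2 * eval r (derivative β) * eval r Q + 2 * eval r β * eval r (derivative Q)) * E1
  exact (mul_eq_zero.mp key3).resolve_left (pow_ne_zero 3 hβr0)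

private lemma dvd_residue (q N : ℂ[X]) (hsq : Squarefree q) (hN : N ≠ 0) (hNq : IsCoprime N q)
    (a b : ℂ[X]) (hb : b ≠ 0)
    (heq : (derivative a * b - a * derivative b) * q ^ 2 = N * b ^ 2) :
    q ∣ derivative N * derivative q - N * derivative (derivative q) := by
  have ha : a ≠ 0 := by
    rintro rfl
    simp only [derivative_zero, zero_mul, mul_zero, sub_zero, zero_sub, neg_zero] at heq
    exact (mul_ne_zero hN (pow_ne_zero _ hb)) heq.symm
  set g := GCDMonoid.gcd a b with hg
  have hg0 : g ≠ 0 := fun h => hb ((gcd_eq_zero_iff a b).mp h).2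
  have ha0 : g * (a / g) = a := EuclideanDomain.mul_div_cancel' hg0 (gcd_dvd_left a b)
  have hb0 : g * (b / g) = b := EuclideanDomain.mul_div_cancel' hg0 (gcd_dvd_right a b)
  set a₀ := a / g with ha₀
  set b₀ := b / g with hb₀
  have hcop : IsCoprime a₀ b₀ := isCoprime_div_gcd_div_gcd hb
  have hb₀0 : b₀ ≠ 0 := fun h => hb (by rw [← hb0, h, mul_zero])
  have heq₀ : (derivative a₀ * b₀ - a₀ * derivative b₀) * q ^ 2 = N * b₀ ^ 2 := by
    have heq' := heq
    rw [← ha0, ← hb0] at heq'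
    simp only [derivative_mul] at heq'
    apply mul_left_cancel₀ (pow_ne_zero 2 hg0)
    linear_combination heq'
  apply sqf_dvd hsq
  intro s hs
  have hNs : N.eval s ≠ 0 := by
    obtain ⟨u, v, huv⟩ := hNq
    intro h0
    have h1 := congrArg (eval s) huv
    simp [h0, hs] at h1
  exact residue_eval hsq hN hb₀0 hcop heq₀ hs hNs

private -- L3: construction
lemma exists_A (q N : ℂ[X]) (hq : IsCoprime q (derivative q))
    (hdvd : q ∣ derivative N * derivative q - N * derivative (derivative q)) :
    ∃ A : ℂ[X], derivative A * q - A * derivative q = N := by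
  obtain ⟨u, v, huv⟩ := id hq
  set G : ℂ[X] := -(N * v) with hG
  set r : ℂ[X] := N * u + derivative (N * v) with hr
  have hNG : derivative G * q - G * derivative q + r * q = N := by
    rw [hG, hr, derivative_neg]
    linear_combination N * huv
  have hd := congrArg derivative hNG
  simp only [derivative_add, derivative_sub, derivative_mul] at hd
  obtain ⟨t, ht⟩ := hdvd
  have key : r * (derivative q) ^ 2 =
      q * (t - (derivative (derivative G) * derivative q - derivative G * derivative (derivative q)
        + derivative r * derivative q - r * derivative (derivative q))) := by
    linear_combination ht + derivative q * hd - derivative (derivative q) * hNG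
  have hqr : q ∣ r := (hq.pow_right (n := 2)).dvd_of_dvd_mul_right ⟨_, key⟩
  obtain ⟨h, hh⟩ := hqr
  obtain ⟨H, hH⟩ := exists_antideriv h
  refine ⟨G + H * q, ?_⟩
  simp only [derivative_add, derivative_mul, hH]
  linear_combination hNG - q * hh

private -- L4: degree lemma
lemma deg_zero (p q : ℂ[X]) (hp : p ≠ 0) (hq : q ≠ 0)
    (h : p * q ∣ derivative (derivative p) * q - 4 * derivative p * derivative q
        + 4 * p * derivative (derivative q)) :
    derivative (derivative p) * q - 4 * derivative p * derivative q
        + 4 * p * derivative (derivative q) = 0 := by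
  by_contra hD
  have hdeg := Polynomial.degree_le_of_dvd h hD
  have hpb : degree p ≠ ⊥ := fun hb => hp (degree_eq_bot.mp hb)
  have hqb : degree q ≠ ⊥ := fun hb => hq (degree_eq_bot.mp hb)
  have h2p : degree (derivative (derivative p)) < degree p := by
    rcases eq_or_ne (derivative p) 0 with h0 | h0
    · rw [h0, derivative_zero, degree_zero]; exact Ne.bot_lt hpb
    · exact (degree_derivative_lt h0).trans (degree_derivative_lt hp)
  have h2q : degree (derivative (derivative q)) < degree q := by
    rcases eq_or_ne (derivative q) 0 with h0 | h0
    · rw [h0, derivative_zero, degree_zero]; exact Ne.bot_lt hqb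
    · exact (degree_derivative_lt h0).trans (degree_derivative_lt hq)
  have h4 : degree (4 : ℂ[X]) = 0 := by
    rw [show (4 : ℂ[X]) = C (4 : ℂ) from (map_ofNat C 4).symm]
    exact degree_C (by norm_num)
  have t1 : degree (derivative (derivative p) * q) < degree (p * q) := by
    rw [degree_mul, degree_mul]
    exact WithBot.add_lt_add_of_lt_of_le hqb h2p le_rfl
  have t2 : degree (4 * derivative p * derivative q) < degree (p * q) := by
    rw [degree_mul, degree_mul, h4, zero_add, degree_mul]
    exact lt_of_le_of_lt (by gcongr; exact degree_derivative_le)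
      (WithBot.add_lt_add_right hqb (degree_derivative_lt hp))
  have t3 : degree (4 * p * derivative (derivative q)) < degree (p * q) := by
    rw [degree_mul, degree_mul, h4, zero_add, degree_mul]
    exact WithBot.add_lt_add_of_le_of_lt hpb le_rfl h2q
  have hD1 : degree (derivative (derivative p) * q - 4 * derivative p * derivative q
      + 4 * p * derivative (derivative q)) < degree (p * q) :=
    lt_of_le_of_lt (degree_add_le _ _)
      (max_lt (lt_of_le_of_lt (degree_sub_le _ _) (max_lt t1 t2)) t3)
  exact lt_irrefl _ (lt_of_le_of_lt hdeg hD1)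

/-- For squarefree coprime `p, q`, rationality of the antiderivatives of
`p/q²` and `q⁴/p²` is equivalent to `{p,q}_2 = 0`. -/
theorem rational_integrals_iff_bilinear_two
    (p q : ℂ[X]) (hp : p ≠ 0) (hq : q ≠ 0)
    (hsp : Squarefree p) (hsq : Squarefree q) (hpq : IsCoprime p q) :
    ((∃ a b : ℂ[X], b ≠ 0 ∧ (derivative a * b - a * derivative b) * q ^ 2 = p * b ^ 2) ∧
     (∃ c d : ℂ[X], d ≠ 0 ∧ (derivative c * d - c * derivative d) * p ^ 2 = q ^ 4 * d ^ 2)) ↔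
    derivative (derivative p) * q - 4 * derivative p * derivative q
        + 4 * p * derivative (derivative q) = 0 := by
  have hC4 : C ((4 : ℕ) : ℂ) = (4 : ℂ[X]) := by rw [Nat.cast_ofNat, map_ofNat]
  constructor
  · rintro ⟨⟨a, b, hb, h1⟩, ⟨c, d, hd, h2⟩⟩
    have hq1 : q ∣ derivative p * derivative q - p * derivative (derivative q) :=
      dvd_residue q p hsq hp hpq a b hb h1
    have hp1 : p ∣ derivative (q ^ 4) * derivative p - q ^ 4 * derivative (derivative p) :=
      dvd_residue p (q ^ 4) hsp (pow_ne_zero 4 hq) (hpq.symm.pow_left) c d hd h2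
    have hp2 : p ∣ q ^ 3 * (4 * derivative q * derivative p - q * derivative (derivative p)) := by
      have he : derivative (q ^ 4) * derivative p - q ^ 4 * derivative (derivative p)
          = q ^ 3 * (4 * derivative q * derivative p - q * derivative (derivative p)) := by
        rw [derivative_pow, hC4]; ring
      rwa [he] at hp1
    have hp3 : p ∣ 4 * derivative q * derivative p - q * derivative (derivative p) :=
      (hpq.pow_right (n := 3)).dvd_of_dvd_mul_left hp2
    obtain ⟨s, hs⟩ := hq1
    obtain ⟨t, ht⟩ := hp3
    have hdq : q ∣ derivative (derivative p) * q - 4 * derivative p * derivative q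
        + 4 * p * derivative (derivative q) :=
      ⟨derivative (derivative p) - 4 * s, by linear_combination (-4 : ℂ[X]) * hs⟩
    have hdp : p ∣ derivative (derivative p) * q - 4 * derivative p * derivative q
        + 4 * p * derivative (derivative q) :=
      ⟨4 * derivative (derivative q) - t, by linear_combination -ht⟩
    exact deg_zero p q hp hq (hpq.mul_dvd hdp hdq)
  · intro hbil
    have hsepq : IsCoprime q (derivative q) := PerfectField.separable_iff_squarefree.mpr hsq
    have hsepp : IsCoprime p (derivative p) := PerfectField.separable_iff_squarefree.mpr hsp
    have hcop4 : IsCoprime q (4 : ℂ[X]) :=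
      ⟨0, C (1/4 : ℂ), by rw [zero_mul, zero_add, ← hC4, ← C_mul]; norm_num⟩
    have h4 : (4 : ℂ[X]) * (derivative p * derivative q - p * derivative (derivative q))
        = q * derivative (derivative p) := by linear_combination (-1 : ℂ[X]) * hbil
    have hd1 : q ∣ derivative p * derivative q - p * derivative (derivative q) :=
      hcop4.dvd_of_dvd_mul_left ⟨derivative (derivative p), h4⟩
    obtain ⟨A, hA⟩ := exists_A q p hsepq hd1
    have hd2 : p ∣ derivative (q ^ 4) * derivative p - q ^ 4 * derivative (derivative p) := by
      refine ⟨4 * q ^ 3 * derivative (derivative q), ?_⟩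
      rw [derivative_pow, hC4]
      linear_combination (-(q ^ 3)) * hbil
    obtain ⟨B, hB⟩ := exists_A p (q ^ 4) hsepp hd2
    exact ⟨⟨A, q, hq, by rw [hA]⟩, ⟨B, p, hp, by rw [hB]⟩⟩
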